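/- There exist a complex Hilbert space H, a densely defined closed operator T on H, and positive self-adjoint operators P and Q on H with P ∘ P = T* ∘ T and Q ∘ Q = T ∘ T* (i.e., P = |T| and Q = |T*|), such that the self-commutator T ∘ T* − T* ∘ T is unbounded, while P ∘ Q − Q ∘ P is the zero operator on its dense domain (in particular bounded). -/

import Mathlib

/- Unbounded (partially defined) operators on a complex Hilbert space are modelled by
Mathlib's `LinearPMap` (`H →ₗ.[ℂ] H`).  `T†` is the adjoint, `T.IsClosed` means the graph
of `T` is closed, and `f - g` is the difference with domain `D(f) ⊓ D(g)`. -/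

noncomputable section

open LinearPMap

/-- The composition `S ∘ T` of two partially defined linear operators, with its natural
(maximal) domain `{x ∈ D(T) : T x ∈ D(S)}`, acting by `x ↦ S (T x)`. -/
def pComp {R E F G : Type*} [Ring R] [AddCommGroup E] [Module R E]
    [AddCommGroup F] [Module R F] [AddCommGroup G] [Module R G]
    (S : F →ₗ.[R] G) (T : E →ₗ.[R] F) : E →ₗ.[R] G where
  domain := (S.domain.comap T.toFun).map T.domain.subtype
  toFun := (S.toFun.comp (T.toFun.restrict (q := S.domain) fun _ hx => hx)).comp
    (Submodule.equivMapOfInjective T.domain.subtype T.domain.injective_subtype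
      (S.domain.comap T.toFun)).symm.toLinearMap

/-- A partially defined operator is bounded if `‖T x‖ ≤ C‖x‖` on its domain for some `C ≥ 0`. -/
def IsBddOp {H : Type*} [NormedAddCommGroup H] [InnerProductSpace ℂ H]
    (T : H →ₗ.[ℂ] H) : Prop :=
  ∃ C : ℝ, 0 ≤ C ∧ ∀ x : T.domain, ‖T x‖ ≤ C * ‖(x : H)‖

/-- A partially defined operator is positive if `⟪T x, x⟫` is real and nonnegative
for every `x` in its domain. -/
def IsPosOp {H : Type*} [NormedAddCommGroup H] [InnerProductSpace ℂ H]
    (T : H →ₗ.[ℂ] H) : Prop :=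
  ∀ x : T.domain, 0 ≤ (inner ℂ (T x) ((x : H)) : ℂ).re ∧ (inner ℂ (T x) ((x : H)) : ℂ).im = 0

/-- A (bundled) complex Hilbert space. -/
structure HilbertC where
  carrier : Type
  [normed : NormedAddCommGroup carrier]
  [ips : InnerProductSpace ℂ carrier]
  [complete : CompleteSpace carrier]

attribute [instance] HilbertC.normed HilbertC.ips HilbertC.complete

/-- The product Hilbert space `H × H` (with inner product
`⟪(x₁,y₁),(x₂,y₂)⟫ = ⟪x₁,x₂⟫ + ⟪y₁,y₂⟫`), i.e. the `L²`-product `WithLp 2 (H × H)`. -/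
abbrev HxH (H : Type) [NormedAddCommGroup H] [InnerProductSpace ℂ H] : Type :=
  WithLp 2 (H × H)

/-- The canonical linear identification of the product Hilbert space `HxH H` with `H × H`. -/
abbrev prodE (H : Type) [NormedAddCommGroup H] [InnerProductSpace ℂ H] :
    HxH H ≃ₗ[ℂ] H × H := WithLp.linearEquiv 2 ℂ (H × H)

open scoped ENNReal

section PCompLemmas
variable {R E F G : Type*} [Ring R] [AddCommGroup E] [Module R E]
    [AddCommGroup F] [Module R F] [AddCommGroup G] [Module R G]

lemma mem_pComp {S : F →ₗ.[R] G} {T : E →ₗ.[R] F} {x : E} :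
    x ∈ (pComp S T).domain ↔ ∃ hx : x ∈ T.domain, T ⟨x, hx⟩ ∈ S.domain := by
  simp only [pComp, Submodule.mem_map, Submodule.mem_comap]
  constructor
  · rintro ⟨y, hy, rfl⟩
    exact ⟨y.2, by simpa [LinearPMap.toFun_eq_coe] using hy⟩
  · rintro ⟨hx, hT⟩
    exact ⟨⟨x, hx⟩, by simpa [LinearPMap.toFun_eq_coe] using hT, rfl⟩

lemma pComp_apply (S : F →ₗ.[R] G) (T : E →ₗ.[R] F)
    (x : (pComp S T).domain) (hx : (x : E) ∈ T.domain) (hx2 : T ⟨x, hx⟩ ∈ S.domain) :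
    pComp S T x = S ⟨T ⟨x, hx⟩, hx2⟩ := by
  set e := Submodule.equivMapOfInjective T.domain.subtype T.domain.injective_subtype
      (S.domain.comap T.toFun) with he
  set z := e.symm x with hzdef
  have hz : e z = x := e.apply_symm_apply x
  have hz1 : ((z : T.domain) : E) = (x : E) := by
    conv_rhs => rw [← hz]
    rw [he, Submodule.coe_equivMapOfInjective_apply]
    rfl
  have hval : pComp S T x = S.toFun ⟨T.toFun (z : T.domain), z.2⟩ := rfl
  rw [hval]
  have h1 : T.toFun (z : T.domain) = T ⟨x, hx⟩ := by
    rw [LinearPMap.toFun_eq_coe]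
    congr 1
    exact Subtype.ext hz1
  rw [LinearPMap.toFun_eq_coe]
  congr 1
  exact Subtype.ext h1

end PCompLemmas

namespace Scratch

abbrev I := ℕ ⊕ ℕ
abbrev Hs : Type := lp (fun _ : I => ℂ) 2

example : CompleteSpace Hs := inferInstance
example : InnerProductSpace ℂ Hs := inferInstance

def wfun (c : I → ℂ) (τ : I ≃ I) (x : I → ℂ) : I → ℂ := fun i => c i * x (τ i)

lemma mem2_of_le {α β : Type*} [NormedAddCommGroup α] [NormedAddCommGroup β]
    {f : I → α} {g : I → β} (hg : Memℓp g 2) (h : ∀ i, ‖f i‖ ≤ ‖g i‖) : Memℓp f 2 := by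
  have h2 : (0:ℝ) < (2 : ℝ≥0∞).toReal := by norm_num
  rw [memℓp_gen_iff h2] at hg ⊢
  refine hg.of_nonneg_of_le (fun i => Real.rpow_nonneg (norm_nonneg _) _) (fun i => ?_)
  exact Real.rpow_le_rpow (norm_nonneg _) (h i) (by norm_num)

lemma mem2_reindex {f : I → ℂ} (π : I ≃ I) (hf : Memℓp f 2) : Memℓp (fun i => f (π i)) 2 := by
  have h2 : (0:ℝ) < (2 : ℝ≥0∞).toReal := by norm_num
  rw [memℓp_gen_iff h2] at hf ⊢
  exact (π.summable_iff (f := fun i => ‖f i‖ ^ (2 : ℝ≥0∞).toReal)).2 hf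

def wdom (c : I → ℂ) (τ : I ≃ I) : Submodule ℂ Hs where
  carrier := {x | Memℓp (wfun c τ x) 2}
  zero_mem' := by
    have : wfun c τ (0 : Hs) = 0 := by funext i; simp [wfun]
    simp only [Set.mem_setOf_eq, this]; exact zero_memℓp
  add_mem' := by
    intro x y hx hy
    have : wfun c τ ((x + y : Hs) : I → ℂ) = wfun c τ x + wfun c τ y := by
      funext i; simp [wfun, lp.coeFn_add, mul_add]
    simp only [Set.mem_setOf_eq, this]
    exact hx.add hy
  smul_mem' := by
    intro a x hx
    have : wfun c τ ((a • x : Hs) : I → ℂ) = a • wfun c τ x := by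
      funext i; simp [wfun, lp.coeFn_smul, mul_smul_comm, mul_left_comm]
    simp only [Set.mem_setOf_eq, this]
    exact hx.const_smul a

def wop (c : I → ℂ) (τ : I ≃ I) : Hs →ₗ.[ℂ] Hs where
  domain := wdom c τ
  toFun :=
  { toFun := fun x => (⟨wfun c τ x, x.2⟩ : Hs)
    map_add' := by
      intro x y; apply lp.ext; funext i
      simp only [wfun, Submodule.coe_add, lp.coeFn_add, Pi.add_apply]
      ring
    map_smul' := by
      intro a x; apply lp.ext; funext i
      simp only [wfun, Submodule.coe_smul, lp.coeFn_smul, Pi.smul_apply, smul_eq_mul,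
        RingHom.id_apply]
      ring }

lemma mem_wop {c : I → ℂ} {τ : I ≃ I} {x : Hs} :
    x ∈ (wop c τ).domain ↔ Memℓp (fun i => c i * x (τ i)) 2 := Iff.rfl

lemma wop_apply (c : I → ℂ) (τ : I ≃ I) (x : (wop c τ).domain) (i : I) :
    (wop c τ x : I → ℂ) i = c i * (x : Hs) (τ i) := rfl


lemma single_apply' (j : I) (a : ℂ) (i : I) :
    (lp.single 2 j a : Hs) i = if i = j then a else 0 := by
  by_cases h : i = j
  · subst h; simp [lp.single_apply_self]
  · simp [lp.single_apply_ne 2 j _ h, h]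

lemma single_mem_wdom (c : I → ℂ) (τ : I ≃ I) (j : I) (a : ℂ) :
    Memℓp (fun i => c i * (lp.single 2 j a : Hs) (τ i)) 2 := by
  refine (memℓp_zero ?_).of_exponent_ge (by norm_num)
  refine (Set.finite_singleton (τ.symm j)).subset ?_
  intro i hi
  simp only [Set.mem_setOf_eq] at hi
  simp only [Set.mem_singleton_iff]
  by_contra hne
  have : τ i ≠ j := fun h => hne (by simp [← h])
  rw [single_apply', if_neg this, mul_zero] at hi
  exact hi rfl

lemma dense_of_singles (D : Submodule ℂ Hs) (h : ∀ (j : I) (a : ℂ), lp.single 2 j a ∈ D) :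
    Dense (D : Set Hs) := by
  intro f
  have hs : HasSum (fun i => lp.single 2 i (f i)) f := lp.hasSum_single (by norm_num) f
  refine mem_closure_of_tendsto hs ?_
  filter_upwards with s
  exact sum_mem fun i _ => h i (f i)

lemma eval_continuous (i : I) : Continuous fun f : Hs => f i := by
  refine (LipschitzWith.mk_one fun f g => ?_).continuous
  rw [dist_eq_norm, dist_eq_norm]
  have : f i - g i = (f - g) i := by rw [lp.coeFn_sub]; rfl
  rw [this]
  exact lp.norm_apply_le_norm (by norm_num) (f - g) i


lemma wop_isClosed (c : I → ℂ) (τ : I ≃ I) : (wop c τ).IsClosed := by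
  have hgraph : ((wop c τ).graph : Set (Hs × Hs)) =
      ⋂ i : I, {z : Hs × Hs | z.2 i - c i * z.1 (τ i) = 0} := by
    ext z
    simp only [SetLike.mem_coe, LinearPMap.mem_graph_iff, Set.mem_iInter, Set.mem_setOf_eq]
    constructor
    · rintro ⟨y, h1, h2⟩ i
      rw [← h1, ← h2, wop_apply, sub_self]
    · intro h
      have hfun : (fun i => c i * z.1 (τ i)) = ⇑z.2 := by
        funext i; have := h i; linear_combination -this
      have hmem : z.1 ∈ (wop c τ).domain := by
        rw [mem_wop, hfun]; exact lp.memℓp z.2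
      refine ⟨⟨z.1, hmem⟩, rfl, ?_⟩
      apply lp.ext; funext i
      rw [wop_apply]
      exact congrFun hfun i
  rw [LinearPMap.IsClosed, hgraph]
  refine isClosed_iInter fun i => isClosed_eq ?_ continuous_const
  exact ((eval_continuous i).comp continuous_snd).sub
    (continuous_const.mul ((eval_continuous (τ i)).comp continuous_fst))

def cadj (c : I → ℂ) (τ : I ≃ I) : I → ℂ := fun i => (starRingEnd ℂ) (c (τ.symm i))

lemma wdom_dense (c : I → ℂ) (τ : I ≃ I) : Dense ((wop c τ).domain : Set Hs) :=
  dense_of_singles _ fun j a => single_mem_wdom c τ j a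

lemma wop_isFormalAdjoint (c : I → ℂ) (τ : I ≃ I) :
    (wop c τ).IsFormalAdjoint (wop (cadj c τ) τ.symm) := by
  intro x y
  rw [lp.inner_eq_tsum, lp.inner_eq_tsum]
  refine Eq.trans (tsum_congr fun i => ?_)
    (Equiv.tsum_eq τ fun j => (inner ℂ ((x : Hs) j) ((wop (cadj c τ) τ.symm y : I → ℂ) j) : ℂ))
  simp only [RCLike.inner_apply, wop_apply, cadj, Equiv.symm_apply_apply, map_mul]
  ring

lemma wop_single (c : I → ℂ) (τ : I ≃ I) (j : I) (a : ℂ) :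
    wop c τ ⟨lp.single 2 j a, single_mem_wdom c τ j a⟩
      = lp.single 2 (τ.symm j) (c (τ.symm j) * a) := by
  apply lp.ext; funext i
  rw [wop_apply, single_apply', single_apply']
  by_cases h : i = τ.symm j
  · subst h; simp [Equiv.apply_symm_apply]
  · have hne : τ i ≠ j := fun hh => h (by rw [← hh, Equiv.symm_apply_apply])
    simp [if_neg hne, if_neg h]

lemma wop_adjoint (c : I → ℂ) (τ : I ≃ I) : (wop c τ)† = wop (cadj c τ) τ.symm := by
  have hd := wdom_dense c τ
  have hle := (wop_isFormalAdjoint c τ).le_adjoint hd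
  refine (LinearPMap.eq_of_le_of_domain_eq hle (le_antisymm hle.1 ?_)).symm
  intro y hy
  rw [LinearPMap.mem_adjoint_domain_iff] at hy
  obtain ⟨C, hC, hbound⟩ := SemilinearMapClass.bound_of_continuous ((innerₛₗ ℂ y).comp (wop c τ).toFun) hy
  set w : I → ℂ := fun j => cadj c τ j * y (τ.symm j) with hw
  show Memℓp w 2
  refine memℓp_gen' (C := C ^ 2) fun s => ?_
  set xs : Hs := ∑ j ∈ s, lp.single 2 j (w j) with hxs
  have hxsmem : xs ∈ (wop c τ).domain := sum_mem fun j _ => single_mem_wdom c τ j (w j)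
  set u : I → (wop c τ).domain :=
    fun j => ⟨lp.single 2 j (w j), single_mem_wdom c τ j (w j)⟩ with hu
  have hsum : (⟨xs, hxsmem⟩ : (wop c τ).domain) = ∑ j ∈ s, u j := by
    apply Subtype.ext
    simp only [AddSubmonoidClass.coe_finset_sum]
    rfl
  have hval : ((innerₛₗ ℂ y).comp (wop c τ).toFun) ⟨xs, hxsmem⟩
      = ((∑ j ∈ s, ‖w j‖ ^ 2 : ℝ) : ℂ) := by
    rw [hsum, map_sum]
    push_cast
    refine Finset.sum_congr rfl fun j _ => ?_
    show (inner ℂ y (wop c τ (u j)) : ℂ) = _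
    rw [show wop c τ (u j) = lp.single 2 (τ.symm j) (c (τ.symm j) * (w j)) from
      wop_single c τ j (w j), lp.inner_single_right]
    have : (inner ℂ ((y : Hs) (τ.symm j)) (c (τ.symm j) * w j) : ℂ)
        = (starRingEnd ℂ) (w j) * w j := by
      simp only [RCLike.inner_apply, hw, cadj, map_mul, RingHomCompTriple.comp_apply,
        RingHom.id_apply, Complex.conj_conj]
      ring
    rw [this, RCLike.conj_mul]
    norm_cast
  have hb := hbound ⟨xs, hxsmem⟩
  rw [hval] at hb
  have hnorm : ‖((∑ j ∈ s, ‖w j‖ ^ 2 : ℝ) : ℂ)‖ = ∑ j ∈ s, ‖w j‖ ^ 2 := by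
    rw [Complex.norm_real, Real.norm_of_nonneg]
    positivity
  rw [hnorm] at hb
  have hxnorm : ‖(⟨xs, hxsmem⟩ : (wop c τ).domain)‖ = ‖xs‖ := rfl
  rw [hxnorm] at hb
  have hN2 : ‖xs‖ ^ (2 : ℝ) = ∑ j ∈ s, ‖w j‖ ^ (2 : ℝ) := by
    have := lp.norm_sum_single (p := 2) (E := fun _ : I => ℂ) (by norm_num) w s
    simpa using this
  have h2r : ∀ r : ℝ, 0 ≤ r → r ^ (2 : ℝ) = r ^ 2 := fun r hr => by
    rw [show ((2:ℝ)) = ((2:ℕ) : ℝ) by norm_num, Real.rpow_natCast]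
  have hterm : ∀ j, ‖w j‖ ^ (2 : ℝ≥0∞).toReal = ‖w j‖ ^ (2 : ℕ) := fun j => by
    rw [show ((2 : ℝ≥0∞)).toReal = (2:ℝ) by norm_num, h2r _ (norm_nonneg _)]
  calc ∑ j ∈ s, ‖w j‖ ^ (2 : ℝ≥0∞).toReal = ∑ j ∈ s, ‖w j‖ ^ 2 := by
        exact Finset.sum_congr rfl fun j _ => hterm j
    _ ≤ C ^ 2 := by
        have hS : ‖xs‖ ^ 2 = ∑ j ∈ s, ‖w j‖ ^ 2 := by
          rw [← h2r _ (norm_nonneg xs), hN2]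
          exact Finset.sum_congr rfl fun j _ => h2r _ (norm_nonneg _)
        nlinarith [norm_nonneg xs, hC, hb, hS, sq_nonneg (C - ‖xs‖)]

lemma wop_congr {c₁ c₂ : I → ℂ} {τ₁ τ₂ : I ≃ I} (hc : c₁ = c₂) (hτ : τ₁ = τ₂) :
    wop c₁ τ₁ = wop c₂ τ₂ := by subst hc; subst hτ; rfl

lemma pComp_wop (c d : I → ℂ) (τ ρ : I ≃ I)
    (h : ∀ x : Hs, Memℓp (fun i => c i * d (τ i) * x (ρ (τ i))) 2 →
      Memℓp (fun i => d i * x (ρ i)) 2) :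
    pComp (wop c τ) (wop d ρ) = wop (fun i => c i * d (τ i)) (τ.trans ρ) := by
  have key : ∀ (x : Hs) (hx : x ∈ (wop d ρ).domain),
      (wop d ρ ⟨x, hx⟩ ∈ (wop c τ).domain) ↔
        Memℓp (fun i => (c i * d (τ i)) * x ((τ.trans ρ) i)) 2 := by
    intro x hx
    rw [mem_wop]
    have : (fun i => c i * (wop d ρ ⟨x, hx⟩ : I → ℂ) (τ i))
        = fun i => (c i * d (τ i)) * x ((τ.trans ρ) i) := by
      funext i; rw [wop_apply]; simp [Equiv.trans_apply]; ring
    rw [this]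
  apply LinearPMap.ext
  · ext x
    rw [mem_pComp]
    constructor
    · rintro ⟨hx, hT⟩
      exact mem_wop.2 ((key x hx).1 hT)
    · intro hx2'
      have hx2 := mem_wop.1 hx2'
      have hd : x ∈ (wop d ρ).domain := by
        rw [mem_wop]
        refine h x ?_
        have : (fun i => c i * d (τ i) * x (ρ (τ i)))
            = fun i => (c i * d (τ i)) * x ((τ.trans ρ) i) := by
          funext i; simp [Equiv.trans_apply]
        rw [this]; exact hx2
      exact ⟨hd, (key x hd).2 hx2⟩
  · intro x0 hf hg
    obtain ⟨x, hxdef⟩ : ∃ x : (pComp (wop c τ) (wop d ρ)).domain, x = ⟨x0, hf⟩ := ⟨_, rfl⟩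
    obtain ⟨y, hydef⟩ : ∃ y : (wop (fun i => c i * d (τ i)) (τ.trans ρ)).domain,
      y = ⟨x0, hg⟩ := ⟨_, rfl⟩
    have hxy : (x : Hs) = y := by rw [hxdef, hydef]
    rw [← hxdef, ← hydef]
    obtain ⟨hx, hT⟩ := mem_pComp.1 x.2
    rw [pComp_apply _ _ x hx hT]
    apply lp.ext; funext i
    rw [wop_apply, wop_apply, wop_apply]
    simp only [Equiv.trans_apply, ← hxy]
    ring

lemma hdom_of_bound (c d : I → ℂ) (τ ρ : I ≃ I)
    (hb : ∀ i, ‖d (τ i)‖ ≤ 1 + ‖c i * d (τ i)‖) (x : Hs)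
    (hx : Memℓp (fun i => c i * d (τ i) * (x : I → ℂ) (ρ (τ i))) 2) :
    Memℓp (fun i => d i * (x : I → ℂ) (ρ i)) 2 := by
  have h1 : Memℓp (fun i => (x : I → ℂ) (ρ (τ i))) 2 :=
    mem2_reindex (τ.trans ρ) (lp.memℓp x)
  have h2 : Memℓp (fun i => ‖(x : I → ℂ) (ρ (τ i))‖
      + ‖c i * d (τ i) * (x : I → ℂ) (ρ (τ i))‖) 2 := by
    refine Memℓp.add (mem2_of_le h1 fun i => ?_) (mem2_of_le hx fun i => ?_) <;>
      rw [norm_norm]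
  have h3 : Memℓp (fun i => d (τ i) * (x : I → ℂ) (ρ (τ i))) 2 := by
    refine mem2_of_le h2 fun i => ?_
    rw [norm_mul]
    have hnn : (0:ℝ) ≤ ‖(x : I → ℂ) (ρ (τ i))‖
        + ‖c i * d (τ i) * (x : I → ℂ) (ρ (τ i))‖ := by positivity
    rw [Real.norm_of_nonneg hnn]
    calc ‖d (τ i)‖ * ‖(x : I → ℂ) (ρ (τ i))‖
        ≤ (1 + ‖c i * d (τ i)‖) * ‖(x : I → ℂ) (ρ (τ i))‖ :=
          mul_le_mul_of_nonneg_right (hb i) (norm_nonneg _)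
      _ = ‖(x : I → ℂ) (ρ (τ i))‖ + ‖c i * d (τ i)‖ * ‖(x : I → ℂ) (ρ (τ i))‖ := by ring
      _ = _ := by rw [← norm_mul]
  have h4 := mem2_reindex τ.symm h3
  have : (fun j => d (τ (τ.symm j)) * (x : I → ℂ) (ρ (τ (τ.symm j))))
      = fun i => d i * (x : I → ℂ) (ρ i) := by
    funext j; rw [Equiv.apply_symm_apply]
  rwa [this] at h4

/-! ### The concrete operators -/

def aw : I → ℂ := Sum.elim (fun n => (n : ℂ) + 1) 0
def pw : I → ℂ := Sum.elim 0 (fun n => (n : ℂ) + 1)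
def σI : I ≃ I := Equiv.sumComm ℕ ℕ

lemma σI_symm : σI.symm = σI := by
  ext i; cases i <;> rfl

lemma σI_σI (i : I) : σI (σI i) = i := by cases i <;> rfl

lemma σI_trans : σI.trans σI = Equiv.refl I := Equiv.ext σI_σI

lemma norm_n1 (n : ℕ) : ‖((n : ℂ) + 1)‖ = (n : ℝ) + 1 := by
  rw [show ((n:ℂ) + 1) = ((n+1 : ℕ) : ℂ) by push_cast; ring]
  rw [Complex.norm_natCast]
  push_cast; ring

lemma T_adjoint : (wop aw σI)† = wop pw σI := by
  rw [wop_adjoint]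
  refine wop_congr ?_ σI_symm
  funext i
  cases i with
  | inl n => simp [cadj, σI_symm, aw, pw, σI, Equiv.sumComm]
  | inr n =>
    simp only [cadj, σI_symm, aw, pw, σI, Equiv.sumComm_apply, Sum.swap, Sum.elim_inr,
      Sum.elim_inl, _root_.map_add, _root_.map_one]
    simp

lemma P_adjoint : (wop pw (Equiv.refl I))† = wop pw (Equiv.refl I) := by
  rw [wop_adjoint]
  refine wop_congr ?_ rfl
  funext i
  cases i with
  | inl n => simp [cadj, pw]
  | inr n => simp [cadj, pw]

lemma Q_adjoint : (wop aw (Equiv.refl I))† = wop aw (Equiv.refl I) := by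
  rw [wop_adjoint]
  refine wop_congr ?_ rfl
  funext i
  cases i with
  | inl n => simp [cadj, aw]
  | inr n => simp [cadj, aw]

lemma comp_TadjT : pComp (wop pw σI) (wop aw σI)
    = wop (fun i => pw i * aw (σI i)) (Equiv.refl I) := by
  rw [pComp_wop pw aw σI σI (hdom_of_bound pw aw σI σI ?_)]
  · exact wop_congr rfl σI_trans
  · intro i
    cases i with
    | inl n => simp [aw, pw, σI]
    | inr n =>
      simp only [σI, Equiv.sumComm_apply, Sum.swap, aw, pw, Sum.elim_inl, Sum.elim_inr, norm_mul,
        norm_n1]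
      nlinarith [norm_n1 n]

lemma comp_TTadj : pComp (wop aw σI) (wop pw σI)
    = wop (fun i => aw i * pw (σI i)) (Equiv.refl I) := by
  rw [pComp_wop aw pw σI σI (hdom_of_bound aw pw σI σI ?_)]
  · exact wop_congr rfl σI_trans
  · intro i
    cases i with
    | inr n => simp [aw, pw, σI]
    | inl n =>
      simp only [σI, Equiv.sumComm_apply, Sum.swap, aw, pw, Sum.elim_inl, Sum.elim_inr, norm_mul,
        norm_n1]
      nlinarith [norm_n1 n]

lemma comp_PP : pComp (wop pw (Equiv.refl I)) (wop pw (Equiv.refl I))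
    = wop (fun i => pw i * pw i) (Equiv.refl I) := by
  rw [pComp_wop pw pw (Equiv.refl I) (Equiv.refl I)
    (hdom_of_bound pw pw (Equiv.refl I) (Equiv.refl I) ?_)]
  · exact wop_congr rfl (Equiv.trans_refl _)
  · intro i
    cases i with
    | inl n => simp [pw]
    | inr n =>
      simp only [Equiv.refl_apply, pw, Sum.elim_inr, norm_mul, norm_n1]
      nlinarith [norm_n1 n]

lemma comp_QQ : pComp (wop aw (Equiv.refl I)) (wop aw (Equiv.refl I))
    = wop (fun i => aw i * aw i) (Equiv.refl I) := by
  rw [pComp_wop aw aw (Equiv.refl I) (Equiv.refl I)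
    (hdom_of_bound aw aw (Equiv.refl I) (Equiv.refl I) ?_)]
  · exact wop_congr rfl (Equiv.trans_refl _)
  · intro i
    cases i with
    | inr n => simp [aw]
    | inl n =>
      simp only [Equiv.refl_apply, aw, Sum.elim_inl, norm_mul, norm_n1]
      nlinarith [norm_n1 n]

lemma PP_eq_TadjT : pComp (wop pw (Equiv.refl I)) (wop pw (Equiv.refl I))
    = pComp ((wop aw σI)†) (wop aw σI) := by
  rw [T_adjoint, comp_TadjT, comp_PP]
  refine wop_congr ?_ rfl
  funext i
  cases i with
  | inl n => simp [pw, aw, σI]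
  | inr n => simp [pw, aw, σI]

lemma QQ_eq_TTadj : pComp (wop aw (Equiv.refl I)) (wop aw (Equiv.refl I))
    = pComp (wop aw σI) ((wop aw σI)†) := by
  rw [T_adjoint, comp_TTadj, comp_QQ]
  refine wop_congr ?_ rfl
  funext i
  cases i with
  | inl n => simp [pw, aw, σI]
  | inr n => simp [pw, aw, σI]

lemma isPosOp_wop (c : I → ℂ) (hre : ∀ i, 0 ≤ (c i).re) (him : ∀ i, (c i).im = 0) :
    IsPosOp (wop c (Equiv.refl I)) := by
  intro x
  have hfun : (fun i => (inner ℂ ((wop c (Equiv.refl I) x : I → ℂ) i) ((x : Hs) i) : ℂ))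
      = fun i => (starRingEnd ℂ) (c i * (x : Hs) i) * (x : Hs) i := by
    funext i
    rw [RCLike.inner_apply, wop_apply]
    exact mul_comm _ _
  have hsum : Summable fun i => (starRingEnd ℂ) (c i * (x : Hs) i) * (x : Hs) i :=
    hfun ▸ lp.summable_inner (wop c (Equiv.refl I) x) (x : Hs)
  have hinner : (inner ℂ (wop c (Equiv.refl I) x) ((x : Hs)) : ℂ)
      = ∑' i, (starRingEnd ℂ) (c i * (x : Hs) i) * (x : Hs) i := by
    rw [lp.inner_eq_tsum, hfun]
  have hre' : (∑' i, (starRingEnd ℂ) (c i * (x : Hs) i) * (x : Hs) i).re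
      = ∑' i, ((starRingEnd ℂ) (c i * (x : Hs) i) * (x : Hs) i).re := by
    simpa using Complex.reCLM.map_tsum hsum
  have him' : (∑' i, (starRingEnd ℂ) (c i * (x : Hs) i) * (x : Hs) i).im
      = ∑' i, ((starRingEnd ℂ) (c i * (x : Hs) i) * (x : Hs) i).im := by
    simpa using Complex.imCLM.map_tsum hsum
  constructor
  · rw [hinner, hre']
    refine tsum_nonneg fun i => ?_
    simp only [Complex.mul_re, Complex.mul_im, Complex.conj_re, Complex.conj_im, him i]
    nlinarith [hre i, sq_nonneg ((x : Hs) i).re, sq_nonneg ((x : Hs) i).im]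
  · rw [hinner, him']
    have : ∀ i, ((starRingEnd ℂ) (c i * (x : Hs) i) * (x : Hs) i).im = 0 := by
      intro i
      simp only [Complex.mul_re, Complex.mul_im, Complex.conj_re, Complex.conj_im, him i]
      ring
    rw [tsum_congr this, tsum_zero]

lemma pw_pos : IsPosOp (wop pw (Equiv.refl I)) := by
  refine isPosOp_wop pw (fun i => ?_) (fun i => ?_) <;> cases i <;> simp [pw] <;> positivity

lemma aw_pos : IsPosOp (wop aw (Equiv.refl I)) := by
  refine isPosOp_wop aw (fun i => ?_) (fun i => ?_) <;> cases i <;> simp [aw] <;> positivity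

lemma not_bdd : ¬ IsBddOp (wop (fun i => aw i * pw (σI i)) (Equiv.refl I)
    - wop (fun i => pw i * aw (σI i)) (Equiv.refl I)) := by
  rintro ⟨C, hC0, hC⟩
  obtain ⟨n, hn⟩ := exists_nat_gt C
  set z : Hs := lp.single 2 (Sum.inl n) 1 with hz
  have hz1 : z ∈ (wop (fun i => aw i * pw (σI i)) (Equiv.refl I)).domain :=
    single_mem_wdom _ _ _ _
  have hz2 : z ∈ (wop (fun i => pw i * aw (σI i)) (Equiv.refl I)).domain :=
    single_mem_wdom _ _ _ _
  have hmem : z ∈ (wop (fun i => aw i * pw (σI i)) (Equiv.refl I)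
      - wop (fun i => pw i * aw (σI i)) (Equiv.refl I)).domain := by
    rw [LinearPMap.sub_domain]; exact ⟨hz1, hz2⟩
  have hnormz : ‖z‖ = 1 := by
    have := lp.norm_single (p := 2) (E := fun _ : I => ℂ) (by norm_num)
      (Sum.inl n) (1:ℂ)
    simpa [hz] using this
  have hcoord : (((wop (fun i => aw i * pw (σI i)) (Equiv.refl I)
      - wop (fun i => pw i * aw (σI i)) (Equiv.refl I)) ⟨z, hmem⟩ : Hs) : I → ℂ) (Sum.inl n)
      = ((n:ℂ)+1) * ((n:ℂ)+1) := by
    rw [LinearPMap.sub_apply, lp.coeFn_sub, Pi.sub_apply, wop_apply, wop_apply]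
    simp [hz, single_apply', aw, pw, σI]
  have hle1 : ‖((n:ℂ)+1) * ((n:ℂ)+1)‖ ≤ ‖(wop (fun i => aw i * pw (σI i)) (Equiv.refl I)
      - wop (fun i => pw i * aw (σI i)) (Equiv.refl I)) ⟨z, hmem⟩‖ := by
    rw [← hcoord]
    exact lp.norm_apply_le_norm (by norm_num) _ _
  have hb := hC ⟨z, hmem⟩
  have hzc : ((⟨z, hmem⟩ : (wop (fun i => aw i * pw (σI i)) (Equiv.refl I)
      - wop (fun i => pw i * aw (σI i)) (Equiv.refl I)).domain) : Hs) = z := rfl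
  rw [hzc, hnormz, mul_one] at hb
  rw [norm_mul, norm_n1] at hle1
  nlinarith [hle1.trans hb]

lemma pqw_zero (i : I) : pw i * aw i = 0 := by cases i <;> simp [pw, aw]

lemma Qx_mem_P (x : Hs) (hx : x ∈ (wop aw (Equiv.refl I)).domain) :
    wop aw (Equiv.refl I) ⟨x, hx⟩ ∈ (wop pw (Equiv.refl I)).domain := by
  rw [mem_wop]
  have : (fun i => pw i * (wop aw (Equiv.refl I) ⟨x, hx⟩ : I → ℂ) ((Equiv.refl I) i))
      = fun _ => (0:ℂ) := by
    funext i
    rw [wop_apply]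
    show pw i * (aw i * x ((Equiv.refl I) i)) = 0
    rw [← mul_assoc, pqw_zero, zero_mul]
  rw [this]
  exact zero_memℓp

lemma Px_mem_Q (x : Hs) (hx : x ∈ (wop pw (Equiv.refl I)).domain) :
    wop pw (Equiv.refl I) ⟨x, hx⟩ ∈ (wop aw (Equiv.refl I)).domain := by
  rw [mem_wop]
  have : (fun i => aw i * (wop pw (Equiv.refl I) ⟨x, hx⟩ : I → ℂ) ((Equiv.refl I) i))
      = fun _ => (0:ℂ) := by
    funext i
    rw [wop_apply]
    show aw i * (pw i * x ((Equiv.refl I) i)) = 0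
    rw [← mul_assoc, mul_comm (aw i), pqw_zero, zero_mul]
  rw [this]
  exact zero_memℓp

lemma PQ_apply_zero (x : (pComp (wop pw (Equiv.refl I)) (wop aw (Equiv.refl I))).domain) :
    pComp (wop pw (Equiv.refl I)) (wop aw (Equiv.refl I)) x = 0 := by
  obtain ⟨hx, hT⟩ := mem_pComp.1 x.2
  rw [pComp_apply _ _ x hx hT]
  apply lp.ext; funext i
  rw [wop_apply]
  show pw i * (wop aw (Equiv.refl I) ⟨(x : Hs), hx⟩ : I → ℂ) ((Equiv.refl I) i) = (0 : Hs) i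
  rw [wop_apply]
  show pw i * (aw i * (x : Hs) ((Equiv.refl I) i)) = (0 : Hs) i
  rw [← mul_assoc, pqw_zero, zero_mul, lp.coeFn_zero, Pi.zero_apply]

lemma QP_apply_zero (x : (pComp (wop aw (Equiv.refl I)) (wop pw (Equiv.refl I))).domain) :
    pComp (wop aw (Equiv.refl I)) (wop pw (Equiv.refl I)) x = 0 := by
  obtain ⟨hx, hT⟩ := mem_pComp.1 x.2
  rw [pComp_apply _ _ x hx hT]
  apply lp.ext; funext i
  rw [wop_apply]
  show aw i * (wop pw (Equiv.refl I) ⟨(x : Hs), hx⟩ : I → ℂ) ((Equiv.refl I) i) = (0 : Hs) i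
  rw [wop_apply]
  show aw i * (pw i * (x : Hs) ((Equiv.refl I) i)) = (0 : Hs) i
  rw [← mul_assoc, mul_comm (aw i), pqw_zero, zero_mul, lp.coeFn_zero, Pi.zero_apply]

lemma PQQP_apply_zero
    (z : (pComp (wop pw (Equiv.refl I)) (wop aw (Equiv.refl I))
      - pComp (wop aw (Equiv.refl I)) (wop pw (Equiv.refl I))).domain) :
    (pComp (wop pw (Equiv.refl I)) (wop aw (Equiv.refl I))
      - pComp (wop aw (Equiv.refl I)) (wop pw (Equiv.refl I))) z = 0 := by
  rw [LinearPMap.sub_apply, PQ_apply_zero, QP_apply_zero, sub_zero]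

lemma PQQP_dense :
    Dense (((pComp (wop pw (Equiv.refl I)) (wop aw (Equiv.refl I))
      - pComp (wop aw (Equiv.refl I)) (wop pw (Equiv.refl I))).domain : Submodule ℂ Hs)
      : Set Hs) := by
  refine dense_of_singles _ fun j a => ?_
  rw [LinearPMap.sub_domain]
  constructor
  · refine mem_pComp.2 ⟨single_mem_wdom aw (Equiv.refl I) j a, ?_⟩
    exact Qx_mem_P _ _
  · refine mem_pComp.2 ⟨single_mem_wdom pw (Equiv.refl I) j a, ?_⟩
    exact Px_mem_Q _ _

lemma PQQP_bdd :
    IsBddOp (pComp (wop pw (Equiv.refl I)) (wop aw (Equiv.refl I))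
      - pComp (wop aw (Equiv.refl I)) (wop pw (Equiv.refl I))) := by
  refine ⟨0, le_refl _, fun z => ?_⟩
  rw [PQQP_apply_zero z, zero_mul, norm_zero]

end Scratch

/-- There exist a complex Hilbert space `H`, a densely defined closed operator `T`, and positive
self-adjoint operators `P`, `Q` with `P ∘ P = T† ∘ T` and `Q ∘ Q = T ∘ T†` (i.e. `P = |T|` and
`Q = |T†|`), such that the self-commutator `T ∘ T† - T† ∘ T` is unbounded while `P ∘ Q - Q ∘ P`
is the zero operator on its dense domain (in particular bounded). -/
theorem stmt_6 :
    ∃ (𝓗 : HilbertC) (T P Q : 𝓗.carrier →ₗ.[ℂ] 𝓗.carrier),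
      Dense (T.domain : Set 𝓗.carrier) ∧ T.IsClosed ∧
      IsPosOp P ∧ P† = P ∧ pComp P P = pComp (T†) T ∧
      IsPosOp Q ∧ Q† = Q ∧ pComp Q Q = pComp T (T†) ∧
      ¬ IsBddOp (pComp T (T†) - pComp (T†) T) ∧
      Dense ((pComp P Q - pComp Q P).domain : Set 𝓗.carrier) ∧
      (∀ z : (pComp P Q - pComp Q P).domain, (pComp P Q - pComp Q P) z = 0) ∧
      IsBddOp (pComp P Q - pComp Q P) := by
  refine ⟨HilbertC.mk Scratch.Hs, Scratch.wop Scratch.aw Scratch.σI,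
    Scratch.wop Scratch.pw (Equiv.refl Scratch.I), Scratch.wop Scratch.aw (Equiv.refl Scratch.I),
    Scratch.wdom_dense _ _, Scratch.wop_isClosed _ _,
    Scratch.pw_pos, Scratch.P_adjoint, Scratch.PP_eq_TadjT,
    Scratch.aw_pos, Scratch.Q_adjoint, Scratch.QQ_eq_TTadj,
    ?_, Scratch.PQQP_dense, Scratch.PQQP_apply_zero, Scratch.PQQP_bdd⟩
  rw [Scratch.T_adjoint, Scratch.comp_TTadj, Scratch.comp_TadjT]
  exact Scratch.not_bdd
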